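/- On the set of n×n row-stochastic matrices, the function D(P₁,P₂) = 2·√( Σ_{i=1}^{n} arccos²( Σ_{j=1}^{n} √(P₁(i,j)·P₂(i,j)) ) ) is a metric: it is nonnegative, D(P₁,P₂) = D(P₂,P₁), D(P₁,P₂) = 0 if and only if P₁ = P₂, and D(P₁,P₃) ≤ D(P₁,P₂) + D(P₂,P₃) for all n×n row-stochastic matrices P₁, P₂, P₃. -/

import Mathlib

open Matrix BigOperators

/-- A row-stochastic matrix: nonnegative entries, each row summing to `1`. -/
def IsRowStochastic {n : ℕ} (P : Matrix (Fin n) (Fin n) ℝ) : Prop :=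
  (∀ i j, 0 ≤ P i j) ∧ ∀ i, ∑ j, P i j = 1

/-- The stochastic matrix distance
`D(P₁,P₂) = 2·√( Σ_i arccos²( Σ_j √(P₁(i,j)·P₂(i,j)) ) )`. -/
noncomputable def stochMatDist {n : ℕ} (P1 P2 : Matrix (Fin n) (Fin n) ℝ) : ℝ :=
  2 * Real.sqrt (∑ i, Real.arccos (∑ j, Real.sqrt (P1 i j * P2 i j)) ^ 2)

section Aux

open Real InnerProductSpace

lemma arccos_antitone' : Antitone Real.arccos := fun x y h => by
  unfold Real.arccos; exact sub_le_sub_left (Real.monotone_arcsin h) _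

/-- Spherical triangle inequality for unit vectors. -/
lemma arccos_inner_triangle' {E : Type*} [NormedAddCommGroup E] [InnerProductSpace ℝ E]
    (x y z : E) (hx : ‖x‖ = 1) (hy : ‖y‖ = 1) (hz : ‖z‖ = 1) :
    Real.arccos ⟪x, z⟫_ℝ ≤ Real.arccos ⟪x, y⟫_ℝ + Real.arccos ⟪y, z⟫_ℝ := by
  set c₁ : ℝ := ⟪x, y⟫_ℝ
  set c₂ : ℝ := ⟪y, z⟫_ℝ
  set c₃ : ℝ := ⟪x, z⟫_ℝ
  have hc₁ : |c₁| ≤ 1 := by simpa [hx, hy] using abs_real_inner_le_norm x y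
  have hc₂ : |c₂| ≤ 1 := by simpa [hy, hz] using abs_real_inner_le_norm y z
  set a := Real.arccos c₁
  set b := Real.arccos c₂
  by_cases hab : π ≤ a + b
  · exact le_trans (Real.arccos_le_pi _) hab
  push_neg at hab
  have ha0 : 0 ≤ a := Real.arccos_nonneg _
  have hb0 : 0 ≤ b := Real.arccos_nonneg _
  set x' := x - c₁ • y
  set z' := z - c₂ • y
  have hyx : ⟪y, x⟫_ℝ = c₁ := real_inner_comm x y
  have hzy : ⟪z, y⟫_ℝ = c₂ := real_inner_comm y z
  have hxx : ⟪x, x⟫_ℝ = 1 := by rw [real_inner_self_eq_norm_sq, hx]; norm_num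
  have hyy : ⟪y, y⟫_ℝ = 1 := by rw [real_inner_self_eq_norm_sq, hy]; norm_num
  have hzz : ⟪z, z⟫_ℝ = 1 := by rw [real_inner_self_eq_norm_sq, hz]; norm_num
  have hx' : ‖x'‖ = Real.sqrt (1 - c₁ ^ 2) := by
    rw [← Real.sqrt_sq (norm_nonneg x'), ← real_inner_self_eq_norm_sq]
    congr 1
    simp only [x', inner_sub_left, inner_sub_right, real_inner_smul_left, real_inner_smul_right,
      hxx, hyy, hyx]
    ring
  have hz' : ‖z'‖ = Real.sqrt (1 - c₂ ^ 2) := by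
    rw [← Real.sqrt_sq (norm_nonneg z'), ← real_inner_self_eq_norm_sq]
    congr 1
    simp only [z', inner_sub_left, inner_sub_right, real_inner_smul_left, real_inner_smul_right,
      hzz, hyy, hzy]
    ring
  have hinner : ⟪x', z'⟫_ℝ = c₃ - c₁ * c₂ := by
    simp only [x', z', inner_sub_left, inner_sub_right, real_inner_smul_left,
      real_inner_smul_right, hyy, hyx, hzy]
    ring
  have hCS : -(‖x'‖ * ‖z'‖) ≤ ⟪x', z'⟫_ℝ := neg_le_of_abs_le (abs_real_inner_le_norm x' z')
  have hkey : Real.cos (a + b) ≤ c₃ := by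
    rw [Real.cos_add]
    have hca : Real.cos a = c₁ := Real.cos_arccos (neg_le_of_abs_le hc₁) (le_of_abs_le hc₁)
    have hcb : Real.cos b = c₂ := Real.cos_arccos (neg_le_of_abs_le hc₂) (le_of_abs_le hc₂)
    have hsa : Real.sin a = Real.sqrt (1 - c₁ ^ 2) := Real.sin_arccos c₁
    have hsb : Real.sin b = Real.sqrt (1 - c₂ ^ 2) := Real.sin_arccos c₂
    rw [hca, hcb, hsa, hsb, ← hx', ← hz']
    nlinarith [hCS, hinner]
  calc Real.arccos c₃ ≤ Real.arccos (Real.cos (a + b)) := arccos_antitone' hkey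
    _ = a + b := Real.arccos_cos (by linarith) (le_of_lt hab)

/-- The `i`-th row of a matrix, with entrywise square roots, as a Euclidean vector. -/
noncomputable def sqrtRow {n : ℕ} (P : Matrix (Fin n) (Fin n) ℝ) (i : Fin n) :
    EuclideanSpace ℝ (Fin n) := WithLp.toLp 2 (fun j => Real.sqrt (P i j))

lemma norm_sqrtRow {n : ℕ} {P : Matrix (Fin n) (Fin n) ℝ} (hP : IsRowStochastic P) (i : Fin n) :
    ‖sqrtRow P i‖ = 1 := by
  rw [EuclideanSpace.norm_eq]
  have : ∀ j, ‖sqrtRow P i j‖ ^ 2 = P i j := by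
    intro j
    simp only [sqrtRow, PiLp.toLp_apply, Real.norm_eq_abs, sq_abs]
    exact Real.sq_sqrt (hP.1 i j)
  rw [Finset.sum_congr rfl (fun j _ => this j), hP.2 i, Real.sqrt_one]

lemma inner_sqrtRow {n : ℕ} {P1 P2 : Matrix (Fin n) (Fin n) ℝ}
    (h1 : IsRowStochastic P1) (i : Fin n) :
    ⟪sqrtRow P1 i, sqrtRow P2 i⟫_ℝ = ∑ j, Real.sqrt (P1 i j * P2 i j) := by
  rw [PiLp.inner_apply]
  refine Finset.sum_congr rfl fun j _ => ?_
  simp only [RCLike.inner_apply, starRingEnd_apply, star_trivial, sqrtRow, PiLp.toLp_apply]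
  rw [mul_comm]
  exact (Real.sqrt_mul (h1.1 i j) _).symm

end Aux

open scoped InnerProductSpace

/-- the stochastic matrix distance is a metric on the set of `n×n`
row-stochastic matrices. -/
theorem stmt_9 (n : ℕ) :
    (∀ P1 P2 : Matrix (Fin n) (Fin n) ℝ, IsRowStochastic P1 → IsRowStochastic P2 →
      0 ≤ stochMatDist P1 P2) ∧
    (∀ P1 P2 : Matrix (Fin n) (Fin n) ℝ, IsRowStochastic P1 → IsRowStochastic P2 →
      stochMatDist P1 P2 = stochMatDist P2 P1) ∧
    (∀ P1 P2 : Matrix (Fin n) (Fin n) ℝ, IsRowStochastic P1 → IsRowStochastic P2 →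
      (stochMatDist P1 P2 = 0 ↔ P1 = P2)) ∧
    (∀ P1 P2 P3 : Matrix (Fin n) (Fin n) ℝ,
      IsRowStochastic P1 → IsRowStochastic P2 → IsRowStochastic P3 →
      stochMatDist P1 P3 ≤ stochMatDist P1 P2 + stochMatDist P2 P3) := by
  refine ⟨?_, ?_, ?_, ?_⟩
  · intro P1 P2 _ _
    unfold stochMatDist
    positivity
  · intro P1 P2 _ _
    unfold stochMatDist
    congr 1
    congr 1
    refine Finset.sum_congr rfl fun i _ => ?_
    congr 2
    exact Finset.sum_congr rfl fun j _ => by rw [mul_comm]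
  · intro P1 P2 h1 h2
    constructor
    · intro h
      unfold stochMatDist at h
      have hsq : Real.sqrt (∑ i, Real.arccos (∑ j, Real.sqrt (P1 i j * P2 i j)) ^ 2) = 0 := by
        linarith
      have hsum : (∑ i, Real.arccos (∑ j, Real.sqrt (P1 i j * P2 i j)) ^ 2) = 0 := by
        have hnn : 0 ≤ ∑ i, Real.arccos (∑ j, Real.sqrt (P1 i j * P2 i j)) ^ 2 :=
          Finset.sum_nonneg fun i _ => sq_nonneg _
        exact (Real.sqrt_eq_zero hnn).mp hsq
      have hzero : ∀ i : Fin n, Real.arccos (∑ j, Real.sqrt (P1 i j * P2 i j)) ^ 2 = 0 :=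
        fun i => (Finset.sum_eq_zero_iff_of_nonneg
          (fun i _ => sq_nonneg _)).mp hsum i (Finset.mem_univ i)
      ext i j
      have hi : Real.arccos (∑ j, Real.sqrt (P1 i j * P2 i j)) = 0 :=
        pow_eq_zero_iff (n := 2) (by norm_num) |>.mp (hzero i)
      have hge : (1 : ℝ) ≤ ∑ j, Real.sqrt (P1 i j * P2 i j) := Real.arccos_eq_zero.mp hi
      have hinner : ⟪sqrtRow P1 i, sqrtRow P2 i⟫_ℝ = ∑ j, Real.sqrt (P1 i j * P2 i j) :=
        inner_sqrtRow h1 i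
      have hle : ⟪sqrtRow P1 i, sqrtRow P2 i⟫_ℝ ≤ 1 := by
        calc ⟪sqrtRow P1 i, sqrtRow P2 i⟫_ℝ ≤ ‖sqrtRow P1 i‖ * ‖sqrtRow P2 i‖ :=
              real_inner_le_norm _ _
          _ = 1 := by rw [norm_sqrtRow h1, norm_sqrtRow h2]; ring
      have heq : ⟪sqrtRow P1 i, sqrtRow P2 i⟫_ℝ = ‖sqrtRow P1 i‖ * ‖sqrtRow P2 i‖ := by
        rw [norm_sqrtRow h1, norm_sqrtRow h2, one_mul]
        rw [hinner]; linarith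
      have hveq : sqrtRow P1 i = sqrtRow P2 i := by
        have := inner_eq_norm_mul_iff_real.mp heq
        rwa [norm_sqrtRow h1, norm_sqrtRow h2, one_smul, one_smul] at this
      have : Real.sqrt (P1 i j) = Real.sqrt (P2 i j) := congrArg (fun v => v j) hveq
      have h1j := h1.1 i j
      have h2j := h2.1 i j
      rw [← Real.sq_sqrt h1j, ← Real.sq_sqrt h2j, this]
    · rintro rfl
      unfold stochMatDist
      have : ∀ i : Fin n, Real.arccos (∑ j, Real.sqrt (P1 i j * P1 i j)) ^ 2 = 0 := by
        intro i
        have : (∑ j, Real.sqrt (P1 i j * P1 i j)) = 1 := by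
          have hs : ∀ j, Real.sqrt (P1 i j * P1 i j) = P1 i j :=
            fun j => Real.sqrt_mul_self (h1.1 i j)
          rw [Finset.sum_congr rfl fun j _ => hs j, h1.2 i]
        rw [this, Real.arccos_one]
        norm_num
      rw [Finset.sum_congr rfl fun i _ => this i]
      simp
  · intro P1 P2 P3 h1 h2 h3
    unfold stochMatDist
    rw [← mul_add]
    have htwo : (0:ℝ) ≤ 2 := by norm_num
    refine mul_le_mul_of_nonneg_left ?_ htwo
    set a : Fin n → ℝ := fun i => Real.arccos (∑ j, Real.sqrt (P1 i j * P2 i j))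
    set b : Fin n → ℝ := fun i => Real.arccos (∑ j, Real.sqrt (P2 i j * P3 i j))
    set c : Fin n → ℝ := fun i => Real.arccos (∑ j, Real.sqrt (P1 i j * P3 i j))
    have hc_le : ∀ i, c i ≤ a i + b i := by
      intro i
      have e1 := inner_sqrtRow (P2 := P2) h1 i
      have e2 := inner_sqrtRow (P2 := P3) h2 i
      have e3 := inner_sqrtRow (P2 := P3) h1 i
      have := arccos_inner_triangle' (sqrtRow P1 i) (sqrtRow P2 i) (sqrtRow P3 i)
        (norm_sqrtRow h1 i) (norm_sqrtRow h2 i) (norm_sqrtRow h3 i)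
      rw [e1, e2, e3] at this
      exact this
    have hc0 : ∀ i, 0 ≤ c i := fun i => Real.arccos_nonneg _
    have ha0 : ∀ i, 0 ≤ a i := fun i => Real.arccos_nonneg _
    have hb0 : ∀ i, 0 ≤ b i := fun i => Real.arccos_nonneg _
    -- Minkowski via EuclideanSpace norms
    set A : EuclideanSpace ℝ (Fin n) := WithLp.toLp 2 (fun i => a i)
    set B : EuclideanSpace ℝ (Fin n) := WithLp.toLp 2 (fun i => b i)
    have hA : ‖A‖ = Real.sqrt (∑ i, a i ^ 2) := by
      rw [EuclideanSpace.norm_eq]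
      congr 1
      exact Finset.sum_congr rfl fun i _ => by simp [A, sq_abs]
    have hB : ‖B‖ = Real.sqrt (∑ i, b i ^ 2) := by
      rw [EuclideanSpace.norm_eq]
      congr 1
      exact Finset.sum_congr rfl fun i _ => by simp [B, sq_abs]
    have hAB : ‖A + B‖ = Real.sqrt (∑ i, (a i + b i) ^ 2) := by
      rw [EuclideanSpace.norm_eq]
      congr 1
      refine Finset.sum_congr rfl fun i _ => ?_
      have : (A + B) i = a i + b i := rfl
      rw [this, Real.norm_eq_abs, sq_abs]
    calc Real.sqrt (∑ i, c i ^ 2) ≤ Real.sqrt (∑ i, (a i + b i) ^ 2) := by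
          apply Real.sqrt_le_sqrt
          exact Finset.sum_le_sum fun i _ => pow_le_pow_left₀ (hc0 i) (hc_le i) 2
      _ = ‖A + B‖ := hAB.symm
      _ ≤ ‖A‖ + ‖B‖ := norm_add_le A B
      _ = Real.sqrt (∑ i, a i ^ 2) + Real.sqrt (∑ i, b i ^ 2) := by rw [hA, hB]
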